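/- Let E be a locally convex Hausdorff topological vector space over ℂ, let T : E → E be a continuous linear operator which is Cesàro bounded, and let x ∈ E satisfy lim_{n→∞} (1/n)·Tⁿx = 0. Then for every y ∈ E the following conditions are equivalent: (a) Ty = y and y belongs to the closed convex hull of the orbit {Tᵐx : m ≥ 0}; (b) T^[n]x → y in the topology of E as n → ∞; (c) u(T^[n]x) → u(y) as n → ∞ for every continuous linear functional u on E (i.e. T^[n]x → y in the weak topology σ(E,E′)); (d) y is a cluster point of the sequence (T^[n]x)_{n≥1} in the weak topology σ(E,E′). -/

import Mathlib

open Filter Topology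

/-- The `n`-th Cesàro mean of `T` applied to `x`: `(1/n) ∑_{m=1}^{n} Tᵐ x`. -/
noncomputable def cesaroMean {E : Type*} [AddCommGroup E] [Module ℂ E] [TopologicalSpace E]
    (T : E →L[ℂ] E) (n : ℕ) (x : E) : E :=
  (n : ℂ)⁻¹ • ∑ m ∈ Finset.Icc 1 n, (T ^ m) x

lemma sum_Icc_shift {M : Type*} [AddCommGroup M] (f : ℕ → M) (n : ℕ) :
    ∑ m ∈ Finset.Icc 1 n, f (m + 1) = ∑ m ∈ Finset.Icc 1 n, f m + f (n + 1) - f 1 := by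
  induction n with
  | zero => simp
  | succ k ih =>
    rw [Finset.sum_Icc_succ_top (Nat.succ_le_succ (Nat.zero_le k)),
      Finset.sum_Icc_succ_top (Nat.succ_le_succ (Nat.zero_le k)), ih]
    abel

lemma cesaro_shift {E : Type*} [AddCommGroup E] [Module ℂ E] [TopologicalSpace E]
    (T : E →L[ℂ] E) (n : ℕ) (z : E) :
    cesaroMean T n (T z) = cesaroMean T n z + (n : ℂ)⁻¹ • ((T ^ (n + 1)) z - T z) := by
  have h : ∀ m : ℕ, (T ^ m) (T z) = (T ^ (m + 1)) z := fun m => by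
    rw [pow_succ, ContinuousLinearMap.mul_apply]
  simp only [cesaroMean, h]
  rw [sum_Icc_shift (fun m => (T ^ m) z) n, pow_one]
  rw [show (∑ m ∈ Finset.Icc 1 n, (T ^ m) z) + (T ^ (n + 1)) z - T z
      = (∑ m ∈ Finset.Icc 1 n, (T ^ m) z) + ((T ^ (n + 1)) z - T z) by abel, smul_add]

lemma real_smul_eq {E : Type*} [AddCommGroup E] [Module ℂ E] [Module ℝ E]
    [IsScalarTower ℝ ℂ E] (r : ℝ) (v : E) : ((r : ℝ) : ℂ) • v = r • v := by
  rw [show ((r : ℝ) : ℂ) = r • (1 : ℂ) from by simp [Complex.real_smul], smul_assoc, one_smul]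

section Aux

variable {E : Type*} [AddCommGroup E] [Module ℂ E] [Module ℝ E] [IsScalarTower ℝ ℂ E]
    [UniformSpace E] [IsUniformAddGroup E] [ContinuousSMul ℂ E]

/-- `cesaroMean` is additive & linear in the vector variable. -/
lemma cesaroMean_add (T : E →L[ℂ] E) (n : ℕ) (z w : E) :
    cesaroMean T n (z + w) = cesaroMean T n z + cesaroMean T n w := by
  simp only [cesaroMean, map_add, Finset.sum_add_distrib, smul_add]

lemma cesaroMean_sub (T : E →L[ℂ] E) (n : ℕ) (z w : E) :
    cesaroMean T n (z - w) = cesaroMean T n z - cesaroMean T n w := by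
  simp only [cesaroMean, map_sub, Finset.sum_sub_distrib, smul_sub]

lemma cesaroMean_smul (T : E →L[ℂ] E) (n : ℕ) (a : ℝ) (z : E) :
    cesaroMean T n (a • z) = a • cesaroMean T n z := by
  simp only [cesaroMean]
  rw [smul_comm]
  congr 1
  rw [Finset.smul_sum]
  exact Finset.sum_congr rfl fun m _ => ((T ^ m).map_smul_of_tower a z)

/-- Tendency of `(n+1)⁻¹ : ℂ` to zero. -/
lemma tendsto_inv_succ_zero :
    Tendsto (fun n : ℕ => ((n + 1 : ℕ) : ℂ)⁻¹) atTop (𝓝 0) := by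
  have h1 : Tendsto (fun n : ℕ => ((n : ℝ))⁻¹) atTop (𝓝 0) :=
    tendsto_inv_atTop_zero.comp tendsto_natCast_atTop_atTop
  have h2 : Tendsto (fun n : ℕ => (((n : ℝ))⁻¹ : ℂ)) atTop (𝓝 0) := by
    simpa [Function.comp_def] using (Complex.continuous_ofReal.tendsto 0).comp h1
  have h3 : Tendsto (fun n : ℕ => ((n : ℕ) : ℂ)⁻¹) atTop (𝓝 0) := by
    simpa [Function.comp_def] using h2
  exact h3.comp (tendsto_add_atTop_nat 1)

end Aux

/-- Eberlein's mean ergodic theorem on a locally convex Hausdorff space. -/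
theorem stmt0 {E : Type*} [AddCommGroup E] [Module ℂ E] [Module ℝ E] [IsScalarTower ℝ ℂ E]
    [UniformSpace E] [IsUniformAddGroup E] [ContinuousSMul ℂ E]
    [LocallyConvexSpace ℝ E] [T2Space E]
    (T : E →L[ℂ] E)
    -- `T` is Cesàro bounded: the family `{T^[n] : n ≥ 1}` is equicontinuous
    (hCes : Equicontinuous fun n : ℕ => cesaroMean T (n + 1))
    (x : E)
    -- `lim_{n→∞} (1/n) Tⁿ x = 0`
    (hx : Tendsto (fun n : ℕ => (n : ℂ)⁻¹ • (T ^ n) x) atTop (𝓝 (0 : E)))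
    (y : E) :
    List.TFAE
      [ -- (a) `T y = y` and `y` is in the closed convex hull of the orbit of `x`
        T y = y ∧ y ∈ closure (convexHull ℝ (Set.range fun m : ℕ => (T ^ m) x)),
        -- (b) `y = lim_n T^[n] x` in the topology of `E`
        Tendsto (fun n : ℕ => cesaroMean T (n + 1) x) atTop (𝓝 y),
        -- (c) `y = lim_n T^[n] x` in the weak topology `σ(E,E′)`
        ∀ u : E →L[ℂ] ℂ,
          Tendsto (fun n : ℕ => u (cesaroMean T (n + 1) x)) atTop (𝓝 (u y)),
        -- (d) `y` is a `σ(E,E′)`-cluster point of the sequence `(T^[n] x)ₙ`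
        MapClusterPt (toWeakSpace ℂ E y) atTop
          (fun n : ℕ => toWeakSpace ℂ E (cesaroMean T (n + 1) x)) ] := by
  haveI : ContinuousSMul ℝ E := IsScalarTower.continuousSMul (M := ℝ) (α := E) ℂ
  set C : Set E := convexHull ℝ (Set.range fun m : ℕ => (T ^ m) x) with hC
  -- separation of points by complex functionals
  have hsep : ∀ z : E, (∀ u : E →L[ℂ] ℂ, u z = 0) → z = 0 := by
    intro z hz
    by_contra h
    obtain ⟨f, hf⟩ := RCLike.geometric_hahn_banach_point_point (𝕜 := ℂ)
      (x := (0 : E)) (y := z) (Ne.symm h)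
    rw [map_zero, hz f] at hf
    simp at hf
  -- the Cesàro means of `x` lie in the convex hull `C`
  have hmem : ∀ n : ℕ, cesaroMean T (n + 1) x ∈ C := by
    intro n
    have hrw : cesaroMean T (n + 1) x
        = ∑ m ∈ Finset.Icc 1 (n + 1), (((n + 1 : ℕ) : ℝ))⁻¹ • (T ^ m) x := by
      rw [cesaroMean, Finset.smul_sum]
      refine Finset.sum_congr rfl fun m _ => ?_
      rw [show (((n + 1 : ℕ) : ℂ))⁻¹ = Complex.ofReal ((((n + 1 : ℕ) : ℝ))⁻¹) from by
          push_cast; ring,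
        real_smul_eq]
    rw [hrw]
    refine (convex_convexHull ℝ _).sum_mem (fun i _ => by positivity) ?_
      (fun i _ => subset_convexHull ℝ _ ⟨i, rfl⟩)
    rw [Finset.sum_const, Nat.card_Icc, nsmul_eq_mul]
    have : ((n + 1 : ℕ) : ℝ) ≠ 0 := by positivity
    field_simp
    simp
  -- key limit: for each fixed `j`, `A_n (T^j x) - A_n x → 0`
  have hx' : Tendsto (fun n : ℕ => ((n + 1 : ℕ) : ℂ)⁻¹ • (T ^ (n + 1)) x) atTop (𝓝 0) :=
    hx.comp (tendsto_add_atTop_nat 1)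
  have hstep : ∀ j : ℕ,
      Tendsto (fun n : ℕ => cesaroMean T (n + 1) ((T ^ (j + 1)) x)
        - cesaroMean T (n + 1) ((T ^ j) x)) atTop (𝓝 0) := by
    intro j
    have hre : ∀ n : ℕ, cesaroMean T (n + 1) ((T ^ (j + 1)) x)
        - cesaroMean T (n + 1) ((T ^ j) x)
        = ((n + 1 : ℕ) : ℂ)⁻¹ • (T ^ (n + 2)) ((T ^ j) x)
          - ((n + 1 : ℕ) : ℂ)⁻¹ • T ((T ^ j) x) := by
      intro n
      have h1 : (T ^ (j + 1)) x = T ((T ^ j) x) := by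
        rw [pow_succ']; rfl
      rw [h1, cesaro_shift T (n + 1) ((T ^ j) x), smul_sub]
      abel
    simp only [hre]
    have h2 : Tendsto (fun n : ℕ => ((n + 1 : ℕ) : ℂ)⁻¹ • (T ^ (n + 2)) ((T ^ j) x))
        atTop (𝓝 0) := by
      have hcomm : ∀ n : ℕ, ((n + 1 : ℕ) : ℂ)⁻¹ • (T ^ (n + 2)) ((T ^ j) x)
          = (T ^ (j + 1)) (((n + 1 : ℕ) : ℂ)⁻¹ • (T ^ (n + 1)) x) := by
        intro n
        rw [map_smul]
        congr 1
        rw [← ContinuousLinearMap.mul_apply, ← pow_add, ← ContinuousLinearMap.mul_apply,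
          ← pow_add, show n + 2 + j = j + 1 + (n + 1) from by omega]
      simp only [hcomm]
      have := ((T ^ (j + 1)).continuous.tendsto 0).comp hx'
      simpa only [Function.comp_def, map_zero] using this
    have h3 : Tendsto (fun n : ℕ => ((n + 1 : ℕ) : ℂ)⁻¹ • T ((T ^ j) x)) atTop (𝓝 0) := by
      have := tendsto_inv_succ_zero.smul_const (T ((T ^ j) x))
      simpa using this
    simpa using h2.sub h3
  have hdiff : ∀ j : ℕ,
      Tendsto (fun n : ℕ => cesaroMean T (n + 1) ((T ^ j) x)
        - cesaroMean T (n + 1) x) atTop (𝓝 0) := by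
    intro j
    induction j with
    | zero => simp only [pow_zero, ContinuousLinearMap.one_apply, sub_self]; exact tendsto_const_nhds
    | succ k ih =>
      have := (hstep k).add ih
      simp only [sub_add_sub_cancel, add_zero] at this
      exact this
  -- the limit extends to all of the convex hull
  have hCz : ∀ z ∈ C, Tendsto (fun n : ℕ => cesaroMean T (n + 1) z
      - cesaroMean T (n + 1) x) atTop (𝓝 0) := by
    intro z hz
    rw [hC] at hz
    refine convexHull_min (t := {z : E | Tendsto
      (fun n : ℕ => cesaroMean T (n + 1) z - cesaroMean T (n + 1) x) atTop (𝓝 0)}) ?_ ?_ hz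
    · rintro _ ⟨j, rfl⟩
      exact hdiff j
    · rintro z₁ h₁ z₂ h₂ a b ha hb hab
      have hrw : ∀ n : ℕ, cesaroMean T (n + 1) (a • z₁ + b • z₂) - cesaroMean T (n + 1) x
          = a • (cesaroMean T (n + 1) z₁ - cesaroMean T (n + 1) x)
            + b • (cesaroMean T (n + 1) z₂ - cesaroMean T (n + 1) x) := by
        intro n
        rw [cesaroMean_add, cesaroMean_smul, cesaroMean_smul,
          show a • (cesaroMean T (n + 1) z₁ - cesaroMean T (n + 1) x)
              + b • (cesaroMean T (n + 1) z₂ - cesaroMean T (n + 1) x)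
            = a • cesaroMean T (n + 1) z₁ + b • cesaroMean T (n + 1) z₂
              - (a + b) • cesaroMean T (n + 1) x from by
            rw [smul_sub, smul_sub, add_smul]; abel, hab, one_smul]
      show Tendsto (fun n : ℕ => cesaroMean T (n + 1) (a • z₁ + b • z₂)
        - cesaroMean T (n + 1) x) atTop (𝓝 0)
      have h₁' : Tendsto (fun n : ℕ => cesaroMean T (n + 1) z₁ - cesaroMean T (n + 1) x)
          atTop (𝓝 0) := h₁
      have h₂' : Tendsto (fun n : ℕ => cesaroMean T (n + 1) z₂ - cesaroMean T (n + 1) x)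
          atTop (𝓝 0) := h₂
      simp only [hrw]
      simpa using (h₁'.const_smul a).add (h₂'.const_smul b)
  tfae_have 1 → 2
  | ⟨hTy, hyC⟩ => by
    -- `A_n y = y`
    have hpow : ∀ m : ℕ, (T ^ m) y = y := by
      intro m
      induction m with
      | zero => simp
      | succ k ih => rw [pow_succ, ContinuousLinearMap.mul_apply, hTy, ih]
    have hfixA : ∀ n : ℕ, cesaroMean T (n + 1) y = y := by
      intro n
      rw [cesaroMean]
      simp only [hpow]
      rw [Finset.sum_const, Nat.card_Icc, ← Nat.cast_smul_eq_nsmul ℂ, smul_smul]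
      have hne : ((n + 1 : ℕ) : ℂ) ≠ 0 := Nat.cast_ne_zero.2 n.succ_ne_zero
      simp only [Nat.add_sub_cancel]
      rw [inv_mul_cancel₀ hne, one_smul]
    have key : Tendsto (fun n : ℕ => cesaroMean T (n + 1) x - y) atTop (𝓝 0) := by
      rw [Filter.tendsto_def]
      intro U hU
      obtain ⟨V, hV, hVU⟩ := exists_nhds_zero_half hU
      have hW : {p : E × E | p.2 - p.1 ∈ V} ∈ uniformity E := by
        rw [uniformity_eq_comap_nhds_zero E]
        exact preimage_mem_comap hV
      have hnhds := hCes y _ hW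
      obtain ⟨z, hzV, hzC⟩ := mem_closure_iff_nhds.1 hyC _ hnhds
      have hz2 : ∀ n : ℕ, cesaroMean T (n + 1) z - y ∈ V := by
        intro n
        have h5 : cesaroMean T (n + 1) z - cesaroMean T (n + 1) y ∈ V := hzV n
        rwa [hfixA n] at h5
      have hev : ∀ᶠ n in atTop, cesaroMean T (n + 1) x - cesaroMean T (n + 1) z ∈ V := by
        have hneg := (hCz z hzC).neg
        simp only [neg_sub, neg_zero] at hneg
        exact hneg.eventually_mem hV
      rw [← Filter.eventually_mem_set]
      filter_upwards [hev] with n hn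
      have hsplit : cesaroMean T (n + 1) x - y
          = (cesaroMean T (n + 1) x - cesaroMean T (n + 1) z)
            + (cesaroMean T (n + 1) z - y) := by abel
      rw [Set.mem_preimage, hsplit]
      exact hVU _ hn _ (hz2 n)
    have := key.add_const y
    simpa using this
  tfae_have 2 → 3
  | hb => fun u => (u.continuous.tendsto y).comp hb
  tfae_have 3 → 4
  | hc => by
    refine Filter.Tendsto.mapClusterPt ?_
    have hinj : Function.Injective ((topDualPairing ℂ E).flip) := by
      intro z₁ z₂ h12
      have : ∀ u : E →L[ℂ] ℂ, u (z₁ - z₂) = 0 := by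
        intro u
        have := congrArg (fun g => g u) h12
        simp only [LinearMap.flip_apply, topDualPairing_apply] at this
        rw [map_sub, this, sub_self]
      have := hsep _ this
      exact sub_eq_zero.1 this
    refine (WeakBilin.tendsto_iff_forall_eval_tendsto _ hinj).2 ?_
    intro u
    exact hc u
  tfae_have 4 → 1
  | hd => by
    have h0 : Tendsto (fun n : ℕ => T (cesaroMean T (n + 1) x) - cesaroMean T (n + 1) x)
        atTop (𝓝 0) := by
      have hcomm : ∀ n : ℕ, T (cesaroMean T (n + 1) x) = cesaroMean T (n + 1) ((T ^ 1) x) := by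
        intro n
        rw [pow_one, cesaroMean, cesaroMean, map_smul, map_sum]
        congr 1
        refine Finset.sum_congr rfl fun m _ => ?_
        rw [← ContinuousLinearMap.mul_apply, ← pow_succ', pow_succ, ContinuousLinearMap.mul_apply]
      simp only [hcomm]
      exact hdiff 1
    constructor
    · -- T y = y
      have hzero : ∀ u : E →L[ℂ] ℂ, u (T y - y) = 0 := by
        intro u
        set g : E →L[ℂ] ℂ := u.comp (T - ContinuousLinearMap.id ℂ E) with hg
        have hgc : Continuous fun w : WeakSpace ℂ E => g ((toWeakSpace ℂ E).symm w) :=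
          WeakBilin.eval_continuous ((topDualPairing ℂ E).flip) g
        have hclust : MapClusterPt (g y) atTop
            (fun n : ℕ => g (cesaroMean T (n + 1) x)) := by
          have := hd.continuousAt_comp (hgc.continuousAt)
          simpa [Function.comp_def] using this
        have htend0 : Tendsto (fun n : ℕ => g (cesaroMean T (n + 1) x)) atTop (𝓝 0) := by
          have h1 : ∀ n : ℕ, g (cesaroMean T (n + 1) x)
              = u (T (cesaroMean T (n + 1) x) - cesaroMean T (n + 1) x) := by
            intro n
            simp [hg, ContinuousLinearMap.sub_apply]
          simp only [h1]
          have := (u.continuous.tendsto 0).comp h0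
          simpa [Function.comp_def] using this
        have hne : ClusterPt (g y) (𝓝 (0 : ℂ)) := hclust.clusterPt.mono htend0
        have : g y = 0 := eq_of_nhds_neBot hne
        simpa [hg, ContinuousLinearMap.sub_apply] using this
      have := hsep _ hzero
      exact sub_eq_zero.1 this
    · -- y in the closed convex hull
      have hle : map (fun n : ℕ => toWeakSpace ℂ E (cesaroMean T (n + 1) x)) atTop
          ≤ 𝓟 (toWeakSpace ℂ E '' C) :=
        le_principal_iff.2 (Filter.mem_map.2 (Filter.univ_mem' fun n =>
          ⟨_, hmem n, rfl⟩))
      have hmemcl : toWeakSpace ℂ E y ∈ closure (toWeakSpace ℂ E '' C) :=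
        mem_closure_iff_clusterPt.2 (hd.clusterPt.mono hle)
      rw [← (convex_convexHull ℝ _).toWeakSpace_closure (𝕜 := ℂ)] at hmemcl
      obtain ⟨y', hy', hey⟩ := hmemcl
      rwa [← (toWeakSpace ℂ E).injective hey]
  tfae_finish
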